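/- Fix for each agent i ∈ [n] a partition M^i = (M^i_1,…,M^i_n) of [m] indexed so that |M^i_1| ≤ … ≤ |M^i_n|, and let s_i be the largest index with |M^i_{s_i}| ≤ 2m/n (so s_i ≥ n/2). If σ is drawn by choosing each σ(i) independently and uniformly from {1,…,s_i}, then the probability that Σ_{i∈[n]} |M^i_{σ(i)}| exceeds m + 6·m·√(log m)/√n is at most 2/m³. -/

import Mathlib

set_option maxHeartbeats 1000000


open Finset

/-- `X : Fin n → Finset α` is a partition of the (finite) ground set `α` into `n`
(possibly empty) pairwise disjoint parts whose union is everything. -/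
def IsPartition {α : Type*} [DecidableEq α] [Fintype α] {n : ℕ}
    (X : Fin n → Finset α) : Prop :=
  (∀ i j : Fin n, i ≠ j → Disjoint (X i) (X j)) ∧
    Finset.univ.biUnion X = Finset.univ

lemma exp_convex_bound {lam c x : ℝ} (hc : 0 < c) (hx0 : 0 ≤ x) (hxc : x ≤ c) :
    Real.exp (lam * x) ≤ 1 + (x / c) * (Real.exp (lam * c) - 1) := by
  have hθ0 : 0 ≤ x / c := div_nonneg hx0 hc.le
  have hθ1 : x / c ≤ 1 := (div_le_one hc).2 hxc
  have h := convexOn_exp.2 (Set.mem_univ (lam * c)) (Set.mem_univ (0:ℝ))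
      hθ0 (by linarith : (0:ℝ) ≤ 1 - x / c) (by ring)
  simp only [smul_eq_mul, mul_zero, add_zero, Real.exp_zero, mul_one] at h
  have hxx : x / c * (lam * c) = lam * x := by field_simp
  rw [hxx] at h
  linarith

lemma mean_bound {n : ℕ} (x : Fin n → ℝ) (hmono : ∀ j k : Fin n, j ≤ k → x j ≤ x k)
    (t : Fin n) :
    (n : ℝ) * ∑ j ∈ Iic t, x j ≤ ((t : ℕ) + 1) * ∑ j, x j := by
  set A := ∑ j ∈ Iic t, x j with hA'
  set B := ∑ j ∈ (Iic t)ᶜ, x j with hB'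
  have htot : A + B = ∑ j, x j := Finset.sum_add_sum_compl _ _
  have hk : ((t : ℕ) + 1 : ℝ) = (Iic t).card := by rw [Fin.card_Iic]; push_cast; ring
  have hcard : ((Iic t)ᶜ.card : ℝ) = (n : ℝ) - ((t : ℕ) + 1) := by
    rw [Finset.card_compl, Fin.card_Iic]
    have h1 : (t : ℕ) + 1 ≤ n := t.isLt
    rw [Fintype.card_fin, Nat.cast_sub h1]
    push_cast; ring
  have hAle : A ≤ ((t : ℕ) + 1) * x t := by
    rw [hk]
    calc A ≤ ∑ _j ∈ Iic t, x t :=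
          Finset.sum_le_sum fun j hj => hmono j t (mem_Iic.mp hj)
      _ = ((Iic t).card : ℝ) * x t := by rw [Finset.sum_const, nsmul_eq_mul]
  have hBge : ((n : ℝ) - ((t : ℕ) + 1)) * x t ≤ B := by
    rw [← hcard]
    calc ((Iic t)ᶜ.card : ℝ) * x t = ∑ _j ∈ (Iic t)ᶜ, x t := by
          rw [Finset.sum_const, nsmul_eq_mul]
      _ ≤ B := Finset.sum_le_sum fun j hj => by
          refine hmono t j (le_of_lt ?_)
          simpa [Finset.mem_compl, Finset.mem_Iic, not_le] using hj
  have hnk : (0:ℝ) ≤ (n : ℝ) - ((t : ℕ) + 1) := by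
    have h1 : (t : ℕ) + 1 ≤ n := t.isLt
    have := (Nat.cast_le (α := ℝ)).2 h1
    push_cast at this ⊢; linarith
  have hk0 : (0:ℝ) ≤ ((t : ℕ) + 1 : ℝ) := by positivity
  nlinarith [mul_le_mul_of_nonneg_left hAle hnk, mul_le_mul_of_nonneg_left hBge hk0]


/-- each agent `i` has a partition `M i` of the goods with parts in
nondecreasing order of size, and `s i` is the largest index whose part has size at
most `2m/n`.  If each `σ i` is chosen independently and uniformly among the indices
`≤ s i`, then the probability that `Σ_i |M i (σ i)|` exceeds
`m + 6 m √(log m) / √n` is at most `2/m³`.  (Stated via counting: the number of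
such choice functions is at most `(2/m³) · Π_i (s i + 1)`.) -/
theorem l1_hoeffding_truncated_bound
    (n m : ℕ) (hn : 0 < n) (hm : 0 < m)
    (M : Fin n → Fin n → Finset (Fin m))
    (hM : ∀ i, IsPartition (M i))
    (hsorted : ∀ i, ∀ j k : Fin n, j ≤ k → (M i j).card ≤ (M i k).card)
    (s : Fin n → Fin n)
    (hsle : ∀ i, ((M i (s i)).card : ℝ) ≤ 2 * m / n)
    (hsmax : ∀ i, ∀ j : Fin n, ((M i j).card : ℝ) ≤ 2 * m / n → j ≤ s i) :
    (Nat.card {σ : Fin n → Fin n //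
        (∀ i, σ i ≤ s i) ∧
        (m : ℝ) + 6 * m * Real.sqrt (Real.logb 2 m) / Real.sqrt n
          < ∑ i, ((M i (σ i)).card : ℝ)} : ℝ)
      ≤ (2 / (m : ℝ) ^ 3) * ∏ i, (((s i : ℕ) : ℝ) + 1) := by
  classical
  have hm0 : (0:ℝ) < m := by exact_mod_cast hm
  have hn0 : (0:ℝ) < n := by exact_mod_cast hn
  have hm1 : (1:ℝ) ≤ m := by exact_mod_cast hm
  set Lr := Real.logb 2 (m:ℝ) with hLrdef
  have hL0 : 0 ≤ Lr := Real.logb_nonneg one_lt_two hm1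
  set sqL := Real.sqrt Lr with hsqLdef
  set sqn := Real.sqrt (n:ℝ) with hsqndef
  have hsqL0 : 0 ≤ sqL := Real.sqrt_nonneg _
  have hsqn0 : 0 < sqn := Real.sqrt_pos.2 hn0
  have hsqn2 : sqn * sqn = n := Real.mul_self_sqrt hn0.le
  have hsqL2 : sqL * sqL = Lr := Real.mul_self_sqrt hL0
  set T := (m:ℝ) + 6 * m * sqL / sqn with hTdef
  -- total size of each partition is m
  have htot : ∀ i, ∑ j, ((M i j).card : ℝ) = m := by
    intro i
    obtain ⟨hdisj, hcover⟩ := hM i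
    have : ∑ j, (M i j).card = m := by
      rw [← Finset.card_biUnion (fun a _ b _ hab => hdisj a b hab), hcover,
        Finset.card_univ, Fintype.card_fin]
    exact_mod_cast congrArg (Nat.cast : ℕ → ℝ) this
  -- each allowed part has size at most 2m/n
  have hsize : ∀ i, ∀ j : Fin n, j ≤ s i → ((M i j).card : ℝ) ≤ 2 * m / n := by
    intro i j hj
    exact le_trans (by exact_mod_cast hsorted i j (s i) hj) (hsle i)
  by_cases h9 : (n:ℝ) ≤ 9 * Lr
  · -- the bad set is empty: every admissible sum is at most 2m ≤ T
    have hsqle : sqn ≤ 3 * sqL := by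
      calc sqn ≤ Real.sqrt (9 * Lr) := Real.sqrt_le_sqrt h9
        _ = 3 * sqL := by
            rw [show (9:ℝ) * Lr = 3^2 * Lr by norm_num, Real.sqrt_mul (by positivity),
              Real.sqrt_sq (by norm_num : (0:ℝ) ≤ 3)]
    have hempty : IsEmpty {σ : Fin n → Fin n //
        (∀ i, σ i ≤ s i) ∧ T < ∑ i, ((M i (σ i)).card : ℝ)} := by
      refine ⟨fun ⟨σ, h1, h2⟩ => ?_⟩
      have hsum : ∑ i, ((M i (σ i)).card : ℝ) ≤ 2 * m := by
        calc ∑ i, ((M i (σ i)).card : ℝ) ≤ ∑ _i : Fin n, 2 * (m:ℝ) / n :=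
              Finset.sum_le_sum fun i _ => hsize i (σ i) (h1 i)
          _ = (n:ℝ) * (2 * m / n) := by
              rw [Finset.sum_const, Finset.card_univ, Fintype.card_fin, nsmul_eq_mul]
          _ = 2 * m := by field_simp
      have hT2m : 2 * (m:ℝ) ≤ T := by
        rw [hTdef]
        have : 2 * (m:ℝ) * sqn ≤ 6 * m * sqL := by nlinarith
        have h' : (m:ℝ) ≤ 6 * m * sqL / sqn := by
          rw [le_div_iff₀ hsqn0]; nlinarith
        linarith
      linarith
    rw [Nat.card_of_isEmpty]
    push_cast
    positivity
  · push_neg at h9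
    clear_value Lr sqL sqn T
    have h3sq : 3 * sqL ≤ sqn := by nlinarith
    set u := 3 * sqL / (2 * sqn) with hudef
    have hu0 : 0 ≤ u := by rw [hudef]; positivity
    have huh : u ≤ 1/2 := by
      rw [hudef, div_le_iff₀ (by positivity)]; linarith
    set lam := u * (n:ℝ) / (2 * m) with hlamdef
    have hlam0 : 0 ≤ lam := by rw [hlamdef]; positivity
    set c := 2 * (m:ℝ) / n with hcdef
    have hc : 0 < c := by rw [hcdef]; positivity
    have hlamc : lam * c = u := by
      rw [hlamdef, hcdef]; field_simp
    set E := Real.exp u - 1 with hEdef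
    have hE0 : 0 ≤ E := by
      have := Real.one_le_exp hu0; rw [hEdef]; linarith
    clear_value u lam c E
    -- per-factor bound
    have hfac : ∀ i, ∑ j ∈ Iic (s i), Real.exp (lam * ((M i j).card : ℝ))
        ≤ (((s i : ℕ) : ℝ) + 1) * Real.exp (E / 2) := by
      intro i
      have hmean : (n:ℝ) * ∑ j ∈ Iic (s i), ((M i j).card : ℝ)
          ≤ (((s i : ℕ) : ℝ) + 1) * m := by
        have := mean_bound (fun j => ((M i j).card : ℝ))
          (fun j k hjk => by exact_mod_cast hsorted i j k hjk) (s i)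
        rwa [htot i] at this
      have step1 : ∑ j ∈ Iic (s i), Real.exp (lam * ((M i j).card : ℝ))
          ≤ ∑ j ∈ Iic (s i), (1 + (((M i j).card : ℝ) / c) * E) := by
        refine Finset.sum_le_sum fun j hj => ?_
        have h := exp_convex_bound (lam := lam) hc (by positivity : (0:ℝ) ≤ ((M i j).card : ℝ))
          (hsize i j (mem_Iic.mp hj))
        rwa [hlamc, ← hEdef] at h
      have step2 : ∑ j ∈ Iic (s i), (1 + (((M i j).card : ℝ) / c) * E)
          = (((s i : ℕ) : ℝ) + 1) + (∑ j ∈ Iic (s i), ((M i j).card : ℝ)) / c * E := by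
        rw [Finset.sum_add_distrib, Finset.sum_const, Fin.card_Iic, nsmul_eq_mul,
          ← Finset.sum_mul, ← Finset.sum_div]
        push_cast; ring
      have hAc : (∑ j ∈ Iic (s i), ((M i j).card : ℝ)) / c * E
          ≤ (((s i : ℕ) : ℝ) + 1) * (E / 2) := by
        have hdiv : (∑ j ∈ Iic (s i), ((M i j).card : ℝ)) / c
            ≤ (((s i : ℕ) : ℝ) + 1) / 2 := by
          rw [div_le_iff₀ hc, hcdef]
          have h2 : ((((s i : ℕ) : ℝ) + 1) / 2) * (2 * m / n)
              = ((((s i : ℕ) : ℝ) + 1) * m) / n := by ring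
          rw [h2, le_div_iff₀ hn0]
          nlinarith [hmean]
        nlinarith
      have hexp : (((s i : ℕ) : ℝ) + 1) * (1 + E / 2)
          ≤ (((s i : ℕ) : ℝ) + 1) * Real.exp (E / 2) := by
        have := Real.add_one_le_exp (E / 2)
        have hk0 : (0:ℝ) ≤ ((s i : ℕ) : ℝ) + 1 := by positivity
        nlinarith
      calc ∑ j ∈ Iic (s i), Real.exp (lam * ((M i j).card : ℝ))
          ≤ (((s i : ℕ) : ℝ) + 1) + (∑ j ∈ Iic (s i), ((M i j).card : ℝ)) / c * E := by
            rw [← step2]; exact step1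
        _ ≤ (((s i : ℕ) : ℝ) + 1) * (1 + E / 2) := by nlinarith
        _ ≤ (((s i : ℕ) : ℝ) + 1) * Real.exp (E / 2) := hexp
    -- counting
    set F := Fintype.piFinset (fun i => Iic (s i)) with hFdef
    set Q : (Fin n → Fin n) → Prop := fun σ => T < ∑ i, ((M i (σ i)).card : ℝ) with hQdef
    have hcard_eq : (Nat.card {σ : Fin n → Fin n //
        (∀ i, σ i ≤ s i) ∧ T < ∑ i, ((M i (σ i)).card : ℝ)} : ℕ)
        = (F.filter Q).card := by
      have hset : {σ : Fin n → Fin n |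
          (∀ i, σ i ≤ s i) ∧ T < ∑ i, ((M i (σ i)).card : ℝ)}
          = ↑(F.filter Q) := by
        ext σ
        simp only [Set.mem_setOf_eq, Finset.coe_filter, Finset.mem_coe, hFdef,
          Fintype.mem_piFinset, Finset.mem_Iic, hQdef]
      calc (Nat.card {σ : Fin n → Fin n //
            (∀ i, σ i ≤ s i) ∧ T < ∑ i, ((M i (σ i)).card : ℝ)} : ℕ)
          = Set.ncard {σ : Fin n → Fin n |
            (∀ i, σ i ≤ s i) ∧ T < ∑ i, ((M i (σ i)).card : ℝ)} :=
            (Nat.card_coe_set_eq _)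
        _ = (F.filter Q).card := by rw [hset, Set.ncard_coe_finset]
    have h1 : ((F.filter Q).card : ℝ)
        ≤ ∑ σ ∈ F, Real.exp (lam * ((∑ i, ((M i (σ i)).card : ℝ)) - T)) := by
      rw [← Finset.sum_boole]
      refine Finset.sum_le_sum fun σ _ => ?_
      by_cases hQσ : Q σ
      · rw [if_pos hQσ]
        refine Real.one_le_exp (mul_nonneg hlam0 ?_)
        have h' : T < ∑ i, ((M i (σ i)).card : ℝ) := hQσ
        linarith
      · rw [if_neg hQσ]
        positivity
    have h2 : ∑ σ ∈ F, Real.exp (lam * ((∑ i, ((M i (σ i)).card : ℝ)) - T))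
        = Real.exp (-(lam * T)) * ∏ i, ∑ j ∈ Iic (s i), Real.exp (lam * ((M i j).card : ℝ)) := by
      rw [Finset.prod_univ_sum, Finset.mul_sum]
      refine Finset.sum_congr rfl fun σ _ => ?_
      rw [← Real.exp_sum, ← Real.exp_add]
      congr 1
      rw [← Finset.mul_sum]
      ring
    have h3 : Real.exp (-(lam * T)) * ∏ i, ∑ j ∈ Iic (s i), Real.exp (lam * ((M i j).card : ℝ))
        ≤ Real.exp (-(lam * T)) * ∏ i, ((((s i : ℕ) : ℝ) + 1) * Real.exp (E / 2)) := by
      refine mul_le_mul_of_nonneg_left ?_ (Real.exp_pos _).le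
      refine Finset.prod_le_prod (fun i _ => Finset.sum_nonneg fun j _ => (Real.exp_pos _).le)
        (fun i _ => hfac i)
    have h4 : Real.exp (-(lam * T)) * ∏ i, ((((s i : ℕ) : ℝ) + 1) * Real.exp (E / 2))
        = (∏ i, (((s i : ℕ) : ℝ) + 1)) * Real.exp ((n:ℝ) * E / 2 - lam * T) := by
      rw [Finset.prod_mul_distrib, Finset.prod_const, Finset.card_univ, Fintype.card_fin,
        ← Real.exp_nat_mul]
      rw [show (n:ℝ) * E / 2 - lam * T = -(lam * T) + (n:ℝ) * (E/2) by ring, Real.exp_add]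
      ring
    -- the exponent is at most -(9/4) Lr
    have husq : u * sqn = 3/2 * sqL := by
      rw [hudef]; field_simp
    have hns : (n:ℝ) / sqn = sqn := by
      rw [← hsqn2, mul_div_assoc, div_self hsqn0.ne', mul_one]
    have hlamT : lam * T = u * n / 2 + 3 * u * sqn * sqL := by
      have hkey : u * (n:ℝ) / (2*m) * ((m:ℝ) + 6*m*sqL/sqn)
          = u * n / 2 + 3 * u * ((n:ℝ)/sqn) * sqL := by
        field_simp
        ring
      rw [hlamdef, hTdef, hkey, hns]
    have hEb : E ≤ u + 2 * u^2 := by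
      have h1m : 1 - u ≤ Real.exp (-u) := by
        have := Real.add_one_le_exp (-u); linarith
      have key : (1 - u) * Real.exp u ≤ 1 := by
        have := mul_le_mul_of_nonneg_right h1m (Real.exp_pos u).le
        rwa [← Real.exp_add, neg_add_cancel, Real.exp_zero] at this
      have hp : (0:ℝ) < 1 - u := by linarith
      rw [hEdef]
      nlinarith [key, hp, mul_nonneg (mul_nonneg hu0 hu0) (by linarith : (0:ℝ) ≤ 1 - 2*u)]
    have hexpo : (n:ℝ) * E / 2 - lam * T ≤ -(9/4) * Lr := by
      have hnE : (n:ℝ) * E / 2 ≤ (n:ℝ) * (u + 2*u^2) / 2 := by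
        have := mul_le_mul_of_nonneg_left hEb hn0.le
        linarith
      have h3u : 3 * u * sqn * sqL = 9/2 * Lr := by
        calc 3 * u * sqn * sqL = 3 * (u * sqn) * sqL := by ring
          _ = 3 * (3/2 * sqL) * sqL := by rw [husq]
          _ = 9/2 * (sqL * sqL) := by ring
          _ = 9/2 * Lr := by rw [hsqL2]
      have hnu2 : (n:ℝ) * u^2 = 9/4 * Lr := by
        calc (n:ℝ) * u^2 = (u * sqn) * (u * sqn) := by rw [← hsqn2]; ring
          _ = (3/2*sqL) * (3/2*sqL) := by rw [husq]
          _ = 9/4 * (sqL * sqL) := by ring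
          _ = 9/4 * Lr := by rw [hsqL2]
      rw [hlamT, h3u]
      nlinarith [hnE, hnu2]
    have hfinal : Real.exp ((n:ℝ) * E / 2 - lam * T) ≤ 2 / (m:ℝ)^3 := by
      have hlog : Lr * Real.log 2 = Real.log m := by
        rw [hLrdef, Real.logb]
        exact div_mul_cancel₀ _ (ne_of_gt (Real.log_pos one_lt_two))
      have hm3 : (m:ℝ)^3 = Real.exp (3 * Real.log m) := by
        rw [show (3:ℝ) * Real.log m = Real.log m + Real.log m + Real.log m by ring,
          Real.exp_add, Real.exp_add, Real.exp_log hm0]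
        ring
      rw [le_div_iff₀ (by positivity : (0:ℝ) < (m:ℝ)^3), hm3, ← Real.exp_add]
      have hln2 : Real.log 2 < 0.6931471808 := Real.log_two_lt_d9
      have harg : (n:ℝ) * E / 2 - lam * T + 3 * Real.log m ≤ 0 := by
        have : 3 * Real.log m = 3 * Real.log 2 * Lr := by rw [← hlog]; ring
        rw [this]
        nlinarith [hexpo, hL0, hln2, Real.log_pos (by norm_num : (1:ℝ) < 2)]
      calc Real.exp ((n:ℝ) * E / 2 - lam * T + 3 * Real.log m) ≤ Real.exp 0 :=
            Real.exp_le_exp.2 harg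
        _ = 1 := Real.exp_zero
        _ ≤ 2 := by norm_num
    -- assemble
    have hprod0 : (0:ℝ) ≤ ∏ i, (((s i : ℕ) : ℝ) + 1) :=
      Finset.prod_nonneg fun i _ => by positivity
    calc (Nat.card {σ : Fin n → Fin n //
        (∀ i, σ i ≤ s i) ∧ T < ∑ i, ((M i (σ i)).card : ℝ)} : ℝ)
        = ((F.filter Q).card : ℝ) := by exact_mod_cast congrArg (Nat.cast : ℕ → ℝ) hcard_eq
      _ ≤ ∑ σ ∈ F, Real.exp (lam * ((∑ i, ((M i (σ i)).card : ℝ)) - T)) := h1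
      _ = Real.exp (-(lam * T)) * ∏ i, ∑ j ∈ Iic (s i), Real.exp (lam * ((M i j).card : ℝ)) := h2
      _ ≤ Real.exp (-(lam * T)) * ∏ i, ((((s i : ℕ) : ℝ) + 1) * Real.exp (E / 2)) := h3
      _ = (∏ i, (((s i : ℕ) : ℝ) + 1)) * Real.exp ((n:ℝ) * E / 2 - lam * T) := h4
      _ ≤ (∏ i, (((s i : ℕ) : ℝ) + 1)) * (2 / (m:ℝ)^3) :=
          mul_le_mul_of_nonneg_left hfinal hprod0
      _ = (2 / (m:ℝ)^3) * ∏ i, (((s i : ℕ) : ℝ) + 1) := by ring
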